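/- Let T1 and T2 be two (finite or infinite) rooted locally finite trees both containing a given word u, equipped with irreducible AUD transition matrices U1 and U2 respectively, with h-invariant measures π1 and π2 (both normalized by π(∅) = 1). If the projections of U1 and U2 onto the branch τ = [[∅,u]] coincide, i.e. U1^τ(a,b) = U2^τ(a,b) for all a,b ∈ τ, then π1(u) = π2(u). -/

import Mathlib

open scoped BigOperators ENNReal

/-- Nodes of trees are finite words over `ℕ`; the root is the empty word. -/
abbrev Word : Type := List ℕ

/-- The parent of a node: the word with its last letter removed. -/
def par (u : Word) : Word := u.dropLast

/-- A rooted locally finite tree: a set of words containing the root, closed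
under prefixes, in which every node has finitely many children. -/
def IsTree (T : Set Word) : Prop :=
  ([] : Word) ∈ T ∧
  (∀ u ∈ T, ∀ v : Word, v <+: u → v ∈ T) ∧
  (∀ u ∈ T, {i : ℕ | u ++ [i] ∈ T}.Finite)

/-- `desc T u` is the set of descendants of `u` in `T` (the subtree `T_u`). -/
def desc (T : Set Word) (u : Word) : Set Word := {w | w ∈ T ∧ u <+: w}

/-- The children of `u` in `T`. -/
def children (T : Set Word) (u : Word) : Set Word := {v | v ∈ T ∧ ∃ i : ℕ, v = u ++ [i]}

/-- A transition matrix on `T`: nonnegative entries, rows summing to 1 over `T`. -/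
def IsTransMatrix (T : Set Word) (U : Word → Word → ℝ) : Prop :=
  (∀ u ∈ T, ∀ v ∈ T, 0 ≤ U u v) ∧ ∀ u ∈ T, HasSum (fun v : T => U u (v : Word)) 1

/-- Almost upper-directed: positive transitions go to the parent or to a descendant. -/
def IsAUD (T : Set Word) (U : Word → Word → ℝ) : Prop :=
  ∀ u ∈ T, ∀ v ∈ T, 0 < U u v → v = par u ∨ v ∈ desc T u

/-- Almost lower-directed: positive transitions go to a child or to an ancestor. -/
def IsALD (T : Set Word) (D : Word → Word → ℝ) : Prop :=
  ∀ u ∈ T, ∀ v ∈ T, 0 < D u v → v ∈ children T u ∨ v <+: u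

/-- Random-walk transition matrix: positive transitions go to `u`, its parent or a child. -/
def IsRW (T : Set Word) (M : Word → Word → ℝ) : Prop :=
  ∀ u ∈ T, ∀ v ∈ T, 0 < M u v → v = u ∨ v = par u ∨ v ∈ children T u

/-- Irreducibility: any node can be reached from any other by positive transitions. -/
def IrreducibleOn (T : Set Word) (U : Word → Word → ℝ) : Prop :=
  ∀ u ∈ T, ∀ v ∈ T, ∃ (n : ℕ) (x : ℕ → Word),
    x 0 = u ∧ x n = v ∧ (∀ k ≤ n, x k ∈ T) ∧ ∀ k < n, 0 < U (x k) (x (k + 1))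

/-- The weight of a path (a list of nodes): product of the transitions along it. -/
def wgt (U : Word → Word → ℝ) : List Word → ℝ
  | x :: y :: rest => U x y * wgt U (y :: rest)
  | _ => 1

/-- A first-return loop at the root. -/
def IsLoop (T : Set Word) (γ : List Word) : Prop :=
  2 ≤ γ.length ∧ γ.head? = some ([] : Word) ∧ γ.getLast? = some ([] : Word) ∧
  (∀ x ∈ γ, x ∈ T) ∧
  ∀ k, 0 < k → k < γ.length - 1 → γ.getD k [] ≠ ([] : Word)

/-- The total weight of first-return loops at the root. -/
noncomputable def loopSum (T : Set Word) (U : Word → Word → ℝ) : ℝ :=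
  ∑' γ : {γ : List Word // IsLoop T γ}, wgt U γ.1

/-- Recurrence: the total weight of first-return loops at the root is 1. -/
def Recurrent (T : Set Word) (U : Word → Word → ℝ) : Prop := loopSum T U = 1

/-- Expected return time to the root. -/
noncomputable def returnTime (T : Set Word) (U : Word → Word → ℝ) : ℝ≥0∞ :=
  ∑' γ : {γ : List Word // IsLoop T γ},
    ((γ.1.length - 1 : ℕ) : ℝ≥0∞) * ENNReal.ofReal (wgt U γ.1)

/-- Positive recurrence: recurrent with finite expected return time. -/
def PosRecurrent (T : Set Word) (U : Word → Word → ℝ) : Prop :=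
  Recurrent T U ∧ returnTime T U < ⊤

/-- `descWeight T U a b = U(a, T_b)`, the total weight from `a` into the subtree `T_b`. -/
noncomputable def descWeight (T : Set Word) (U : Word → Word → ℝ) (a b : Word) : ℝ :=
  ∑' w : desc T b, U a (w : Word)

/-- The matrix `(Id - ᵘU)^{(u)}`: rows/columns indexed by the strict prefixes of `u`
(the prefix of length `i` corresponds to the index `i`), the column of `u` removed. -/
noncomputable def hMat (T : Set Word) (U : Word → Word → ℝ) (u : Word) :
    Matrix (Fin u.length) (Fin u.length) ℝ :=
  Matrix.of fun i j =>
    (if i = j then 1 else 0) -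
      (if (i : ℕ) ≤ (j : ℕ) + 1 then
        descWeight T U (u.take i) (u.take j) - descWeight T U (u.take i) (u.take ((j : ℕ) + 1))
       else 0)

/-- The h-invariant measure `π` of an AUD transition matrix, with `π(∅) = 1`:
`π(u) = det((Id - ᵘU)^{(u)}) / ∏_{∅ ≠ v ⪯ u} U(v, p(v))`. -/
noncomputable def hInv (T : Set Word) (U : Word → Word → ℝ) (u : Word) : ℝ :=
  (hMat T U u).det / ∏ k ∈ Finset.range u.length, U (u.take (k + 1)) (u.take k)

/-- Paths from `i` to the root whose interior stays away from the root and below height `b`. -/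
def IsEscape (T : Set Word) (i : Word) (b : ℕ) (γ : List Word) : Prop :=
  2 ≤ γ.length ∧ γ.head? = some i ∧ γ.getLast? = some ([] : Word) ∧
  (∀ x ∈ γ, x ∈ T) ∧
  ∀ k, 0 < k → k < γ.length - 1 → γ.getD k [] ≠ ([] : Word) ∧ (γ.getD k []).length < b

/-- `qval T U i b`: total weight of paths from `i` to the root staying away from the
root and below height `b` in their interior. -/
noncomputable def qval (T : Set Word) (U : Word → Word → ℝ) (i : Word) (b : ℕ) : ℝ :=
  ∑' γ : {γ : List Word // IsEscape T i b γ}, wgt U γ.1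

/-- An end of a tree: an infinite injective path starting at the root. -/
def IsEnd (T : Set Word) (p : ℕ → Word) : Prop :=
  p 0 = [] ∧ ∀ k, p (k + 1) ∈ children T (p k)

/-- `T^𝕡`: the nodes of the end `𝕡` together with the finite subtrees hanging from
its neighbors. -/
def endTree (T : Set Word) (p : ℕ → Word) : Set Word :=
  Set.range p ∪
    {v | v ∈ T ∧ ∃ w ∈ T, w <+: v ∧ w ∉ Set.range p ∧ par w ∈ Set.range p ∧ (desc T w).Finite}

/-- `projTo T p w v`: the projection `℘_𝕡` sends `w` to `v` (fixing `T^𝕡`, and sending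
any other node to its highest ancestor on `𝕡`). -/
def projTo (T : Set Word) (p : ℕ → Word) (w v : Word) : Prop :=
  (w ∈ endTree T p ∧ v = w) ∨
  (w ∉ endTree T p ∧ v ∈ Set.range p ∧ v <+: w ∧
    ∀ v' ∈ Set.range p, v' <+: w → v' <+: v)

/-- The projected transition matrix `U^𝕡` on `T^𝕡`. -/
noncomputable def projMat (T : Set Word) (p : ℕ → Word) (U : Word → Word → ℝ)
    (u v : Word) : ℝ :=
  ∑' w : {w : Word // w ∈ T ∧ projTo T p w v}, U u (w : Word)

/-- Longest common prefix of two words. -/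
def lcp : Word → Word → Word
  | a :: as, b :: bs => if a = b then a :: lcp as bs else []
  | _, _ => []

/-- Graph distance on the tree. -/
def treeDist (u v : Word) : ℕ :=
  (u.length - (lcp u v).length) + (v.length - (lcp u v).length)

/-- A first-return path from `w` to the set `B`. -/
def IsReturnPath (T : Set Word) (B : Set Word) (w : Word) (γ : List Word) : Prop :=
  2 ≤ γ.length ∧ γ.head? = some w ∧ (∀ x ∈ γ, x ∈ T) ∧
  (∀ k, 0 < k → k < γ.length - 1 → γ.getD k [] ∉ B) ∧
  ∃ z ∈ B, γ.getLast? = some z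

open Classical in
/-- `expReturn T U B w`: the expected first-return time from `w` to `B`, set to `∞`
when return to `B` is not almost sure. -/
noncomputable def expReturn (T : Set Word) (U : Word → Word → ℝ) (B : Set Word)
    (w : Word) : ℝ≥0∞ :=
  if (∑' γ : {γ : List Word // IsReturnPath T B w γ}, wgt U γ.1) = 1 then
    ∑' γ : {γ : List Word // IsReturnPath T B w γ},
      ((γ.1.length - 1 : ℕ) : ℝ≥0∞) * ENNReal.ofReal (wgt U γ.1)
  else ⊤

/-- `P(T)`: nodes with infinitely many descendants (union of the ends of `T`). -/
def Ptree (T : Set Word) : Set Word := {u | u ∈ T ∧ (desc T u).Infinite}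

/-- `Q(T) = 1 + ∑_{u ∈ P(T)} (|c_{P(T)}(u)| - 1)`, valued in `ℝ≥0∞`. -/
noncomputable def Qval (T : Set Word) : ℝ≥0∞ :=
  1 + ∑' u : Ptree T, (((children (Ptree T) (u : Word)).ncard - 1 : ℕ) : ℝ≥0∞)

/-- Complex version of `hMat`, with `λ` on the diagonal: `(λ·Id - ᵘU)^{(u)}`. -/
noncomputable def hMatC (T : Set Word) (U : Word → Word → ℝ) (lam : ℂ) (u : Word) :
    Matrix (Fin u.length) (Fin u.length) ℂ :=
  Matrix.of fun i j =>
    (if i = j then lam else 0) -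
      (if (i : ℕ) ≤ (j : ℕ) + 1 then
        ((descWeight T U (u.take i) (u.take j) : ℝ) : ℂ) -
          ((descWeight T U (u.take i) (u.take ((j : ℕ) + 1)) : ℝ) : ℂ)
       else 0)

/-- `π^{(λ)}(u) = det((λ·Id - ᵘU)^{(u)}) / ∏_{∅ ≠ v ⪯ u} U(v, p(v))`. -/
noncomputable def piLam (T : Set Word) (U : Word → Word → ℝ) (lam : ℂ) (u : Word) : ℂ :=
  (hMatC T U lam u).det /
    ∏ k ∈ Finset.range u.length, ((U (u.take (k + 1)) (u.take k) : ℝ) : ℂ)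

/-- The measure `π̄` of a random walk: `π̄(u) = ∏_j M(u[j-1],u[j]) / M(u[j],u[j-1])`. -/
noncomputable def rwInv (M : Word → Word → ℝ) (u : Word) : ℝ :=
  ∏ k ∈ Finset.range u.length, (M (u.take k) (u.take (k + 1)) / M (u.take (k + 1)) (u.take k))

lemma take_mem_tree {T : Set Word} (hT : IsTree T) {u : Word} (hu : u ∈ T) (n : ℕ) :
    u.take n ∈ T := hT.2.1 u hu _ (List.take_prefix n u)

lemma descWeight_step {T : Set Word} {U : Word → Word → ℝ}
    (hT : IsTree T) (hM : IsTransMatrix T U) (hA : IsAUD T U)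
    {u : Word} (hu : u ∈ T) {k : ℕ} (hk : k < u.length) :
    descWeight T U (u.take (k+1)) (u.take k)
      - descWeight T U (u.take (k+1)) (u.take (k+1))
      = U (u.take (k+1)) (u.take k) := by
  set a := u.take (k+1) with ha
  set b := u.take k with hb
  have haT : a ∈ T := take_mem_tree hT hu _
  have hbT : b ∈ T := take_mem_tree hT hu _
  have hla : a.length = k + 1 := by simp [ha]; omega
  have hlb : b.length = k := by simp [hb]; omega
  have hba : b = a.take k := by
    rw [ha, hb, List.take_take]; congr 1; omega
  have hpar : par a = b := by
    rw [par, List.dropLast_eq_take, hla, hba]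
    norm_num
  have hsub : desc T a ⊆ desc T b := by
    intro w hw
    exact ⟨hw.1, (hba ▸ (List.take_prefix k a)).trans hw.2⟩
  have hbnota : b ∉ desc T a := by
    intro hw
    have := hw.2.length_le
    omega
  have hbb : b ∈ desc T b := ⟨hbT, List.prefix_refl _⟩
  -- summability
  have hsumT : Summable (T.indicator (U a)) :=
    (summable_subtype_iff_indicator).mp (hM.2 a haT).summable
  have hsumset : ∀ s : Set Word, s ⊆ T → Summable (s.indicator (U a)) := by
    intro s hs
    have : s.indicator (U a) = s.indicator (T.indicator (U a)) := by
      rw [Set.indicator_indicator, Set.inter_eq_self_of_subset_left hs]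
    rw [this]
    exact hsumT.indicator s
  have hdescb : desc T b ⊆ T := fun w hw => hw.1
  have hdesca : desc T a ⊆ T := fun w hw => hw.1
  have hsingle : ({b} : Set Word) ⊆ T := by simpa using hbT
  -- key function identity
  have hfun : (desc T b).indicator (U a)
      = (desc T a).indicator (U a) + ({b} : Set Word).indicator (U a) := by
    funext w
    by_cases hwa : w ∈ desc T a
    · have hwb : w ∈ desc T b := hsub hwa
      have hwne : w ≠ b := by
        intro h
        have := hwa.2.length_le
        rw [h, hlb] at this
        omega
      simp [Set.indicator_of_mem hwb, Set.indicator_of_mem hwa,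
        Set.indicator_of_notMem (by simpa using hwne : w ∉ ({b} : Set Word)), Pi.single_apply, hwne]
    · by_cases hweb : w = b
      · subst hweb
        simp [Set.indicator_of_mem hbb, Set.indicator_of_notMem hwa]
      · by_cases hwb : w ∈ desc T b
        · have hzero : U a w = 0 := by
            by_contra hne
            have hpos : 0 < U a w := lt_of_le_of_ne (hM.1 a haT w hwb.1) (Ne.symm hne)
            rcases hA a haT w hwb.1 hpos with h | h
            · exact hweb (h.trans hpar)
            · exact hwa h
          simp [Set.indicator_of_mem hwb, Set.indicator_of_notMem hwa,
            Set.indicator_of_notMem (by simpa using hweb : w ∉ ({b} : Set Word)), hzero, Pi.single_apply, hweb]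
        · simp [Set.indicator_of_notMem hwb, Set.indicator_of_notMem hwa,
            Set.indicator_of_notMem (by simpa using hweb : w ∉ ({b} : Set Word)), Pi.single_apply, hweb]
  have e1 : descWeight T U a b = ∑' w, (desc T b).indicator (U a) w := by
    rw [descWeight, tsum_subtype]
  have e2 : descWeight T U a a = ∑' w, (desc T a).indicator (U a) w := by
    rw [descWeight, tsum_subtype]
  have e3 : (∑' w, ({b} : Set Word).indicator (U a) w) = U a b := by
    rw [← tsum_subtype]
    exact tsum_singleton b (U a)
  rw [e1, e2, hfun]
  simp only [Pi.add_apply]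
  rw [Summable.tsum_add (hsumset _ hdesca) (hsumset _ hsingle), e3]
  ring

theorem hInv_local (T₁ T₂ : Set Word) (hT₁ : IsTree T₁) (hT₂ : IsTree T₂)
    (U₁ U₂ : Word → Word → ℝ) (u : Word) (hu₁ : u ∈ T₁) (hu₂ : u ∈ T₂)
    (hM₁ : IsTransMatrix T₁ U₁) (hA₁ : IsAUD T₁ U₁) (hI₁ : IrreducibleOn T₁ U₁)
    (hM₂ : IsTransMatrix T₂ U₂) (hA₂ : IsAUD T₂ U₂) (hI₂ : IrreducibleOn T₂ U₂)
    (hproj₁ : ∀ j ≤ u.length, ∀ k < u.length,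
      descWeight T₁ U₁ (u.take j) (u.take k) - descWeight T₁ U₁ (u.take j) (u.take (k + 1)) =
      descWeight T₂ U₂ (u.take j) (u.take k) - descWeight T₂ U₂ (u.take j) (u.take (k + 1)))
    (hproj₂ : ∀ j ≤ u.length,
      descWeight T₁ U₁ (u.take j) u = descWeight T₂ U₂ (u.take j) u) :
    hInv T₁ U₁ u = hInv T₂ U₂ u := by
  have hmat : hMat T₁ U₁ u = hMat T₂ U₂ u := by
    ext i j
    simp only [hMat, Matrix.of_apply]
    congr 1
    by_cases h : (i : ℕ) ≤ (j : ℕ) + 1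
    · simp only [if_pos h]
      exact hproj₁ i (le_of_lt i.2) j j.2
    · simp only [if_neg h]
  have hden : ∀ k < u.length,
      U₁ (u.take (k + 1)) (u.take k) = U₂ (u.take (k + 1)) (u.take k) := by
    intro k hk
    rw [← descWeight_step hT₁ hM₁ hA₁ hu₁ hk, ← descWeight_step hT₂ hM₂ hA₂ hu₂ hk]
    exact hproj₁ (k + 1) (by omega) k hk
  unfold hInv
  rw [hmat]
  congr 1
  exact Finset.prod_congr rfl fun k hk => hden k (Finset.mem_range.mp hk)
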